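/- Let T be a rooted tree with root b such that for every vertex v, the subtree of vertices within distance k of v (rooted at v) is a k-tree (every leaf at distance exactly k from v, every internal vertex has 3 children except at most one with 2 children). Then there is a constant C > 0 such that the number of vertices of T at distance at most n from b is at least C·(3·(2/3)^{1/k})^n for all n ∈ ℕ. -/

import Mathlib

section Tree

variable {V : Type*}

/-- The set of children of a vertex `v` in a rooted tree described by a parent map. -/
def childrenSet (root : V) (parent : V → V) (v : V) : Set V :=
  {w : V | w ≠ root ∧ parent w = v}

/-- `w` is a descendant of `v` at distance exactly `m` (following the parent map `m`
times from `w` reaches `v`, with depth increasing accordingly). -/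
def DescAt (parent : V → V) (depth : V → ℕ) (v : V) (m : ℕ) (w : V) : Prop :=
  parent^[m] w = v ∧ depth w = depth v + m

end Tree

section Aux

variable {V : Type*} (b : V) (parent : V → V) (depth : V → ℕ)

/-- Descendants of `v` at distance exactly `j`. -/
def Dset (parent : V → V) (depth : V → ℕ) (v : V) (j : ℕ) : Set V :=
  {w | DescAt parent depth v j w}

lemma mem_Dset {parent : V → V} {depth : V → ℕ} {v w : V} {j : ℕ} :
    w ∈ Dset parent depth v j ↔ parent^[j] w = v ∧ depth w = depth v + j := Iff.rfl

lemma Dset_zero (v : V) : Dset parent depth v 0 = {v} := by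
  ext w
  simp only [Dset, DescAt, Set.mem_setOf_eq, Function.iterate_zero, id_eq, add_zero,
    Set.mem_singleton_iff]
  exact ⟨fun h => h.1, fun h => ⟨h, by rw [h]⟩⟩

variable (hdroot : depth b = 0) (hdepth : ∀ v : V, v ≠ b → depth v = depth (parent v) + 1)

include hdroot hdepth in
lemma depth_iter : ∀ j (w : V), j ≤ depth w → depth (parent^[j] w) + j = depth w := by
  intro j
  induction j with
  | zero => intro w _; simp
  | succ j ih =>
    intro w hw
    have hwb : w ≠ b := by
      intro h; rw [h, hdroot] at hw; omega
    have h1 : depth w = depth (parent w) + 1 := hdepth w hwb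
    have h2 : j ≤ depth (parent w) := by omega
    have h3 := ih (parent w) h2
    rw [Function.iterate_succ_apply]
    omega

include hdroot hdepth in
lemma Dset_add (v : V) (j' j : ℕ) :
    Dset parent depth v (j' + j) = ⋃ u ∈ Dset parent depth v j', Dset parent depth u j := by
  ext w
  simp only [Dset, DescAt, Set.mem_setOf_eq, Set.mem_iUnion, exists_prop]
  constructor
  · rintro ⟨h1, h2⟩
    have hle : j ≤ depth w := by omega
    have h3 := depth_iter b parent depth hdroot hdepth j w hle
    refine ⟨parent^[j] w, ⟨?_, by omega⟩, rfl, by omega⟩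
    rw [← Function.iterate_add_apply]; exact h1
  · rintro ⟨u, ⟨h1, h2⟩, h3, h4⟩
    exact ⟨by rw [Function.iterate_add_apply, h3, h1], by omega⟩

include hdroot hdepth in
lemma Dset_one (v : V) : Dset parent depth v 1 = childrenSet b parent v := by
  ext w
  simp only [Dset, DescAt, Set.mem_setOf_eq, Function.iterate_one, childrenSet]
  constructor
  · rintro ⟨h1, h2⟩
    refine ⟨fun hb => ?_, h1⟩
    rw [hb, hdroot] at h2; omega
  · rintro ⟨h1, h2⟩
    exact ⟨h2, by rw [hdepth w h1, h2]⟩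

end Aux

open Finset in
lemma ncard_biUnion_eq {V : Type*} {s : Set V} (hs : s.Finite) (f : V → Set V)
    (hf : ∀ u ∈ s, (f u).Finite)
    (hdisj : ∀ u ∈ s, ∀ u' ∈ s, u ≠ u' → Disjoint (f u) (f u')) :
    (⋃ u ∈ s, f u).ncard = ∑ u ∈ hs.toFinset, (f u).ncard := by
  classical
  have key : (⋃ u ∈ s, f u) = ↑(hs.toFinset.biUnion fun u =>
      if h : (f u).Finite then h.toFinset else ∅) := by
    ext w
    simp only [Set.mem_iUnion, exists_prop, Finset.coe_biUnion, Finset.mem_coe,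
      Set.Finite.mem_toFinset, Set.mem_iUnion]
    constructor
    · rintro ⟨u, hu, hw⟩
      refine ⟨u, hu, ?_⟩
      rw [dif_pos (hf u hu)]
      exact (hf u hu).mem_toFinset.2 hw
    · rintro ⟨u, hu, hw⟩
      rw [dif_pos (hf u hu)] at hw
      exact ⟨u, hu, (hf u hu).mem_toFinset.1 hw⟩
  rw [key, Set.ncard_coe_finset, Finset.card_biUnion]
  · refine Finset.sum_congr rfl fun u hu => ?_
    have hu' := hs.mem_toFinset.1 hu
    rw [dif_pos (hf u hu'), ← Set.ncard_coe_finset, (hf u hu').coe_toFinset]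
  · intro x hx y hy hxy
    have hx' := hs.mem_toFinset.1 hx
    have hy' := hs.mem_toFinset.1 hy
    show Disjoint (if h : (f x).Finite then h.toFinset else ∅) (if h : (f y).Finite then h.toFinset else ∅)
    rw [dif_pos (hf x hx'), dif_pos (hf y hy')]
    rw [Finset.disjoint_left]
    intro a ha hay
    exact Set.disjoint_left.mp (hdisj x hx' y hy' hxy) ((hf x hx').mem_toFinset.1 ha)
      ((hf y hy').mem_toFinset.1 hay)


/-- let `T` be a rooted tree (encoded by a root `b`, a parent map and a
depth function) such that for every vertex `v`, the depth-`k` subtree rooted at `v` is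
a `k`-tree: every vertex of the subtree at depth `< k` below `v` has exactly `3`
children, except at most one such vertex which has exactly `2` children (in particular
no leaf of `T` occurs at depth `< k` below `v`).  Then there is `C > 0` with
`f_T(n) ≥ C·(3·(2/3)^{1/k})^n` for all `n`, where `f_T(n)` is the number of vertices at
distance at most `n` from the root. -/
theorem tree_growth_lower_bound
    {V : Type*} (k : ℕ) (hk : 1 ≤ k)
    (b : V) (parent : V → V) (depth : V → ℕ)
    (hroot : parent b = b) (hdroot : depth b = 0)
    (hdepth : ∀ v : V, v ≠ b → depth v = depth (parent v) + 1)
    (hbranch : ∀ v w : V, ∀ m : ℕ, m < k → DescAt parent depth v m w →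
      Nat.card (childrenSet b parent w) = 3 ∨ Nat.card (childrenSet b parent w) = 2)
    (hunique : ∀ v : V, ∀ w w' : V, ∀ m m' : ℕ, m < k → m' < k →
      DescAt parent depth v m w → DescAt parent depth v m' w' →
      Nat.card (childrenSet b parent w) = 2 → Nat.card (childrenSet b parent w') = 2 →
      w = w') :
    ∃ C : ℝ, 0 < C ∧ ∀ n : ℕ,
      C * ((3 : ℝ) * ((2 : ℝ) / 3) ^ ((1 : ℝ) / (k : ℝ))) ^ n
        ≤ (Nat.card {v : V // depth v ≤ n} : ℝ) := by
  classical
  set c : V → ℕ := fun w => Nat.card (childrenSet b parent w) with hc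
  have hc23 : ∀ w, c w = 3 ∨ c w = 2 := fun w =>
    hbranch w w 0 (by omega) ⟨by simp, by simp⟩
  have hc2 : ∀ w, 2 ≤ c w := fun w => by rcases hc23 w with h | h <;> omega
  have hcfin : ∀ w, (childrenSet b parent w).Finite := by
    intro w
    have hpos : 0 < Nat.card (childrenSet b parent w) := lt_of_lt_of_le two_pos (hc2 w)
    rw [Nat.card_pos_iff] at hpos
    exact Set.finite_coe_iff.mp hpos.2
  have hcn : ∀ w, (childrenSet b parent w).ncard = c w := fun w =>
    (Nat.card_coe_set_eq _).symm
  -- finiteness of descendant sets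
  have hDfin : ∀ (j : ℕ) (v : V), (Dset parent depth v j).Finite := by
    intro j
    induction j with
    | zero => intro v; rw [Dset_zero]; exact Set.finite_singleton v
    | succ j ih =>
      intro v
      rw [Dset_add b parent depth hdroot hdepth v j 1]
      exact (ih v).biUnion fun u _ => by
        rw [Dset_one b parent depth hdroot hdepth]; exact hcfin u
  -- disjointness
  have hdisjD : ∀ (j : ℕ) (u u' : V), u ≠ u' →
      Disjoint (Dset parent depth u j) (Dset parent depth u' j) := by
    intro j u u' hne
    rw [Set.disjoint_left]
    rintro w ⟨h1, _⟩ ⟨h1', _⟩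
    exact hne (by rw [← h1, ← h1'])
  -- cardinality of one step as a sum of children counts
  have hDcard : ∀ (v : V) (j : ℕ),
      (Dset parent depth v (j + 1)).ncard = ∑ u ∈ (hDfin j v).toFinset, c u := by
    intro v j
    rw [Dset_add b parent depth hdroot hdepth v j 1,
      ncard_biUnion_eq (hDfin j v) _ (fun u _ => hDfin 1 u)
        (fun u _ u' _ h => hdisjD 1 u u' h)]
    exact Finset.sum_congr rfl fun u _ => by
      rw [Dset_one b parent depth hdroot hdepth, hcn]
  -- general multiplicative lower bound
  have hmul : ∀ (j cl : ℕ), (∀ u : V, cl ≤ (Dset parent depth u j).ncard) →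
      ∀ (v : V) (j' : ℕ),
        cl * (Dset parent depth v j').ncard ≤ (Dset parent depth v (j' + j)).ncard := by
    intro j cl hcl v j'
    rw [Dset_add b parent depth hdroot hdepth v j' j,
      ncard_biUnion_eq (hDfin j' v) _ (fun u _ => hDfin j u)
        (fun u _ u' _ h => hdisjD j u u' h)]
    have hcard : (Dset parent depth v j').ncard = (hDfin j' v).toFinset.card :=
      Set.ncard_eq_toFinset_card _ _
    rw [hcard, mul_comm]
    calc (hDfin j' v).toFinset.card * cl
        = (hDfin j' v).toFinset.card • cl := by rw [smul_eq_mul]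
      _ ≤ ∑ u ∈ (hDfin j' v).toFinset, (Dset parent depth u j).ncard :=
          Finset.card_nsmul_le_sum _ _ _ fun u _ => hcl u
  have hone : ∀ u : V, 2 ≤ (Dset parent depth u 1).ncard := fun u => by
    rw [Dset_one b parent depth hdroot hdepth, hcn]; exact hc2 u
  -- the key depth-k window lower bound
  have hkbound : ∀ v : V, 2 * 3 ^ (k - 1) ≤ (Dset parent depth v k).ncard := by
    intro v
    have main : ∀ j, j ≤ k →
        ((∀ m, m < j → ∀ w ∈ Dset parent depth v m, c w = 3)
            ∧ 3 ^ j ≤ (Dset parent depth v j).ncard)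
        ∨ ((∃ m, m < j ∧ ∃ w ∈ Dset parent depth v m, c w = 2)
            ∧ 2 * 3 ^ j ≤ 3 * (Dset parent depth v j).ncard) := by
      intro j
      induction j with
      | zero =>
        intro _
        left
        refine ⟨fun m hm => by omega, ?_⟩
        rw [Dset_zero]; simp
      | succ j ih =>
        intro hjk
        have hjk' : j < k := by omega
        have hsum := hDcard v j
        set s := (hDfin j v).toFinset with hs
        have hcards : (Dset parent depth v j).ncard = s.card :=
          Set.ncard_eq_toFinset_card _ _
        have hmem : ∀ u, u ∈ s ↔ u ∈ Dset parent depth v j := fun u =>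
          (hDfin j v).mem_toFinset
        have h3j : (1:ℕ) ≤ 3 ^ j := Nat.one_le_pow _ _ (by omega)
        have hpowj : (3:ℕ) ^ (j + 1) = 3 * 3 ^ j := by rw [pow_succ]; ring
        rcases ih (by omega) with ⟨hter, hge⟩ | ⟨⟨m0, hm0, w0, hw0, hcw0⟩, hge⟩
        · by_cases hb : ∃ u ∈ s, c u = 2
          · obtain ⟨u0, hu0, hcu0⟩ := hb
            have h3 : ∀ u ∈ s.erase u0, c u = 3 := by
              intro u hu
              obtain ⟨hne, hus⟩ := Finset.mem_erase.mp hu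
              rcases hc23 u with h | h
              · exact h
              · exact absurd (hunique v u u0 j j hjk' hjk' ((hmem u).mp hus)
                  ((hmem u0).mp hu0) h hcu0) hne
            have hsum2 : ∑ u ∈ s, c u = 3 * s.card - 1 := by
              rw [← Finset.add_sum_erase s c hu0, hcu0,
                Finset.sum_congr rfl h3, Finset.sum_const, smul_eq_mul,
                Finset.card_erase_of_mem hu0]
              have h1 : 1 ≤ s.card := Finset.card_pos.mpr ⟨u0, hu0⟩
              omega
            right
            refine ⟨⟨j, by omega, u0, (hmem u0).mp hu0, hcu0⟩, ?_⟩
            rw [hsum, hsum2]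
            rw [hcards] at hge
            have hpow : (3:ℕ) ^ (j + 1 + 1) = 9 * 3 ^ j := by
              rw [pow_succ, pow_succ]; ring
            -- need 2 * 3^(j+1) ≤ 3 * (3 * s.card - 1)
            omega
          · push_neg at hb
            have h3 : ∀ u ∈ s, c u = 3 := by
              intro u hu; rcases hc23 u with h | h
              · exact h
              · exact absurd h (hb u hu)
            have hsum2 : ∑ u ∈ s, c u = 3 * s.card := by
              rw [Finset.sum_congr rfl h3, Finset.sum_const, smul_eq_mul, mul_comm]
            left
            constructor
            · intro m hm w hw
              rcases Nat.lt_succ_iff_lt_or_eq.mp hm with h | h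
              · exact hter m h w hw
              · subst h; exact h3 w ((hmem w).mpr hw)
            · rw [hsum, hsum2, hpowj]
              rw [hcards] at hge
              omega
        · have h3 : ∀ u ∈ s, c u = 3 := by
            intro u hu
            rcases hc23 u with h | h
            · exact h
            · exfalso
              have heq : u = w0 := hunique v u w0 j m0 hjk' (by omega)
                ((hmem u).mp hu) hw0 h hcw0
              have hdu : depth u = depth v + j := ((hmem u).mp hu).2
              have hdw : depth w0 = depth v + m0 := hw0.2
              rw [heq] at hdu
              omega
          have hsum2 : ∑ u ∈ s, c u = 3 * s.card := by
            rw [Finset.sum_congr rfl h3, Finset.sum_const, smul_eq_mul, mul_comm]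
          right
          refine ⟨⟨m0, by omega, w0, hw0, hcw0⟩, ?_⟩
          rw [hsum, hsum2, hpowj]
          rw [hcards] at hge
          omega
    have hfin := main k le_rfl
    have hpowk : (3:ℕ) ^ k = 3 * 3 ^ (k - 1) := by
      conv_lhs => rw [show k = (k - 1) + 1 by omega]
      rw [pow_succ]; ring
    rcases hfin with ⟨_, hge⟩ | ⟨_, hge⟩ <;> omega
  -- growth of g n := |Dset b n|
  have hg1 : ∀ (v : V) (j' : ℕ),
      2 * (Dset parent depth v j').ncard ≤ (Dset parent depth v (j' + 1)).ncard :=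
    hmul 1 2 hone
  have hgk : ∀ (v : V) (j' : ℕ),
      (2 * 3 ^ (k - 1)) * (Dset parent depth v j').ncard
        ≤ (Dset parent depth v (j' + k)).ncard :=
    hmul k _ hkbound
  set g : ℕ → ℕ := fun n => (Dset parent depth b n).ncard with hg
  have hg0 : g 0 = 1 := by
    simp only [hg, Dset_zero]
    exact Set.ncard_singleton b
  have h2s : ∀ s : ℕ, 2 ^ s ≤ g s := by
    intro s
    induction s with
    | zero => simp [hg0]
    | succ s ih =>
      calc 2 ^ (s + 1) = 2 * 2 ^ s := by ring
        _ ≤ 2 * g s := by omega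
        _ ≤ g (s + 1) := hg1 b s
  set M : ℕ := 2 * 3 ^ (k - 1) with hM
  have hMq : ∀ (q s : ℕ), M ^ q * 2 ^ s ≤ g (s + q * k) := by
    intro q
    induction q with
    | zero => intro s; simpa using h2s s
    | succ q ih =>
      intro s
      have he : s + (q + 1) * k = (s + q * k) + k := by ring
      rw [he]
      calc M ^ (q + 1) * 2 ^ s = M * (M ^ q * 2 ^ s) := by ring
        _ ≤ M * g (s + q * k) := Nat.mul_le_mul_left M (ih s)
        _ ≤ g ((s + q * k) + k) := hgk b (s + q * k)
  -- every vertex of depth n is in Dset b n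
  have hdepth_mem : ∀ (n : ℕ) (w : V), depth w = n → w ∈ Dset parent depth b n := by
    intro n
    induction n with
    | zero =>
      intro w hw
      have hwb : w = b := by
        by_contra hb
        have := hdepth w hb
        omega
      rw [Dset_zero, hwb]
      exact rfl
    | succ n ih =>
      intro w hw
      have hwb : w ≠ b := by intro h; rw [h, hdroot] at hw; omega
      have hp : depth (parent w) = n := by have := hdepth w hwb; omega
      have hparent := ih (parent w) hp
      refine mem_Dset.mpr ⟨?_, by rw [hdroot]; omega⟩
      rw [Function.iterate_succ_apply]
      exact (mem_Dset.mp hparent).1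
  have hsetle : ∀ n : ℕ, {w : V | depth w ≤ n}
      = ⋃ m ∈ Finset.range (n + 1), Dset parent depth b m := by
    intro n
    ext w
    simp only [Set.mem_setOf_eq, Set.mem_iUnion, Finset.mem_range, exists_prop]
    constructor
    · intro hw
      exact ⟨depth w, by omega, hdepth_mem (depth w) w rfl⟩
    · rintro ⟨m, hm, hw⟩
      have := (mem_Dset.mp hw).2
      rw [hdroot] at this
      omega
  have hfinle : ∀ n : ℕ, {w : V | depth w ≤ n}.Finite := by
    intro n
    rw [hsetle n]
    exact Set.Finite.biUnion (Finset.range (n + 1)).finite_toSet fun m _ => hDfin m b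
  have hmain : ∀ n : ℕ, g n ≤ Nat.card {v : V // depth v ≤ n} := by
    intro n
    have h1 : Nat.card {v : V // depth v ≤ n} = {w : V | depth w ≤ n}.ncard :=
      Nat.card_coe_set_eq _
    rw [h1]
    refine Set.ncard_le_ncard ?_ (hfinle n)
    intro w hw
    have := (mem_Dset.mp hw).2
    rw [hdroot] at this
    simp only [Set.mem_setOf_eq]
    omega
  -- real arithmetic
  have hk0 : (k : ℝ) ≠ 0 := by positivity
  set r : ℝ := 3 * ((2 : ℝ) / 3) ^ ((1 : ℝ) / (k : ℝ)) with hr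
  have hx01 : (0:ℝ) ≤ 2 / 3 := by norm_num
  have hrpos : 0 < r := by
    rw [hr]
    positivity
  have hrk : r ^ k = (M : ℝ) := by
    rw [hr, mul_pow, ← Real.rpow_natCast (((2:ℝ)/3) ^ ((1:ℝ)/(k:ℝ))) k,
      ← Real.rpow_mul hx01]
    have : (1 : ℝ) / (k : ℝ) * (k : ℕ) = 1 := by field_simp
    rw [this, Real.rpow_one]
    have h3k : (3:ℝ) ^ k = 3 ^ (k - 1) * 3 := by
      rw [← pow_succ]
      congr 1
      omega
    rw [h3k]
    push_cast [hM]
    ring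
  have hrle3 : r ≤ 3 := by
    rw [hr]
    have : ((2:ℝ)/3) ^ ((1:ℝ)/(k:ℝ)) ≤ 1 :=
      Real.rpow_le_one hx01 (by norm_num) (by positivity)
    nlinarith
  refine ⟨((2:ℝ)/3) ^ (k - 1), by positivity, ?_⟩
  intro n
  set C : ℝ := ((2:ℝ)/3) ^ (k - 1) with hC
  obtain ⟨q, s, hqs, hslt⟩ : ∃ q s : ℕ, s + q * k = n ∧ s < k :=
    ⟨n / k, n % k, Nat.mod_add_div' n k, Nat.mod_lt n (by omega)⟩
  have e1 : r ^ n = (M:ℝ) ^ q * r ^ s := by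
    rw [← hqs, pow_add, mul_comm q k, pow_mul, hrk, mul_comm]
  have key : C * r ^ s ≤ 2 ^ s := by
    have h1 : r ^ s ≤ 3 ^ s := pow_le_pow_left₀ hrpos.le hrle3 s
    have h2 : C ≤ ((2:ℝ)/3) ^ s :=
      pow_le_pow_of_le_one (by norm_num) (by norm_num) (by omega)
    calc C * r ^ s ≤ ((2:ℝ)/3) ^ s * 3 ^ s := by
          apply mul_le_mul h2 h1 (by positivity) (by positivity)
      _ = 2 ^ s := by
          rw [← mul_pow]; norm_num
  have hN : M ^ q * 2 ^ s ≤ g n := by rw [← hqs]; exact hMq q s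
  have hNle : (g n : ℝ) ≤ (Nat.card {v : V // depth v ≤ n} : ℝ) := by
    exact_mod_cast hmain n
  calc C * r ^ n = (M:ℝ) ^ q * (C * r ^ s) := by rw [e1]; ring
    _ ≤ (M:ℝ) ^ q * 2 ^ s := by
        apply mul_le_mul_of_nonneg_left key (by positivity)
    _ ≤ (g n : ℝ) := by exact_mod_cast hN
    _ ≤ _ := hNle
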